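/- The truncated Wasserstein distance is Lipschitz in the truncation parameter: for 0 < λ₁ ≤ λ₂, W_{d_{λ₂}}(μ,ν) − W_{d_{λ₁}}(μ,ν) ≤ (λ₂ − λ₁)·TV(μ,ν), where TV(μ,ν) = (1/2)Σ_x|μ(x)−ν(x)|. -/
import Mathlib


open Finset

variable {X : Type*} [Fintype X]

/-- A probability vector on a finite set. -/
def IsProb (μ : X → ℝ) : Prop := (∀ x, 0 ≤ μ x) ∧ ∑ x, μ x = 1

/-- A coupling of `μ` and `ν`. -/
def IsCoupling (μ ν : X → ℝ) (π : X → X → ℝ) : Prop :=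
  (∀ x y, 0 ≤ π x y) ∧ (∀ x, ∑ y, π x y = μ x) ∧ (∀ y, ∑ x, π x y = ν y)

/-- Wasserstein-1 distance on a finite space with ground cost `d`. -/
noncomputable def W (d : X → X → ℝ) (μ ν : X → ℝ) : ℝ :=
  sInf {c | ∃ π : X → X → ℝ, IsCoupling μ ν π ∧ c = ∑ x, ∑ y, d x y * π x y}

/-- Total variation distance between probability vectors. -/
noncomputable def TV (μ ν : X → ℝ) : ℝ := (1 / 2) * ∑ x, |μ x - ν x|

open scoped Classical

noncomputable def cost (d : X → X → ℝ) (π : X → X → ℝ) : ℝ := ∑ x, ∑ y, d x y * π x y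

lemma cost_continuous (d : X → X → ℝ) : Continuous (cost d) := by
  unfold cost
  apply continuous_finset_sum
  intro x _
  apply continuous_finset_sum
  intro y _
  exact continuous_const.mul ((continuous_apply y).comp (continuous_apply x))

lemma diag_continuous : Continuous (fun π : X → X → ℝ => ∑ x, π x x) := by
  apply continuous_finset_sum
  intro x _
  exact (continuous_apply x).comp (continuous_apply x)

lemma coupling_set_compact (μ ν : X → ℝ) (hμ : IsProb μ) (hν : IsProb ν) :
    IsCompact {π : X → X → ℝ | IsCoupling μ ν π} := by
  apply IsCompact.of_isClosed_subset (isCompact_Icc (a := (0 : X → X → ℝ)) (b := 1))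
  · have h1 : IsClosed {π : X → X → ℝ | ∀ x y, 0 ≤ π x y} := by
      rw [Set.setOf_forall]
      refine isClosed_iInter fun x => ?_
      rw [Set.setOf_forall]
      exact isClosed_iInter fun y =>
        isClosed_le continuous_const ((continuous_apply y).comp (continuous_apply x))
    have h2 : IsClosed {π : X → X → ℝ | ∀ x, ∑ y, π x y = μ x} := by
      rw [Set.setOf_forall]
      refine isClosed_iInter fun x => isClosed_eq ?_ continuous_const
      exact continuous_finset_sum _ fun y _ => (continuous_apply y).comp (continuous_apply x)
    have h3 : IsClosed {π : X → X → ℝ | ∀ y, ∑ x, π x y = ν y} := by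
      rw [Set.setOf_forall]
      refine isClosed_iInter fun y => isClosed_eq ?_ continuous_const
      exact continuous_finset_sum _ fun x _ => (continuous_apply y).comp (continuous_apply x)
    have : {π : X → X → ℝ | IsCoupling μ ν π} =
        {π : X → X → ℝ | ∀ x y, 0 ≤ π x y} ∩
        ({π : X → X → ℝ | ∀ x, ∑ y, π x y = μ x} ∩ {π : X → X → ℝ | ∀ y, ∑ x, π x y = ν y}) := by
      ext π; simp [IsCoupling, Set.mem_setOf_eq, and_assoc]
    rw [this]
    exact h1.inter (h2.inter h3)
  · intro π hπ
    obtain ⟨hpos, hrow, _⟩ := hπ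
    constructor
    · intro x y
      exact hpos x y
    · intro x y
      have h1 : π x y ≤ ∑ y', π x y' :=
        Finset.single_le_sum (fun i _ => hpos x i) (mem_univ y)
      have h2 : μ x ≤ ∑ x', μ x' :=
        Finset.single_le_sum (fun i _ => hμ.1 i) (mem_univ x)
      have : π x y ≤ μ x := by rw [← hrow x]; exact h1
      calc π x y ≤ μ x := this
        _ ≤ 1 := by rw [← hμ.2]; exact h2
      

lemma sum_sum_ite_mul (f : X → X → ℝ) (u v : X) :
    ∑ a, ∑ b, (if a = u ∧ b = v then (1:ℝ) else 0) * f a b = f u v := by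
  simp [ite_and, ite_mul, Finset.sum_ite_irrel, Finset.sum_ite_eq']

lemma sum_ite_row (a u v : X) :
    ∑ b, (if a = u ∧ b = v then (1:ℝ) else 0) = if a = u then 1 else 0 := by
  simp [ite_and, Finset.sum_ite_irrel, Finset.sum_ite_eq']

lemma sum_ite_col (b u v : X) :
    ∑ a, (if a = u ∧ b = v then (1:ℝ) else 0) = if b = v then 1 else 0 := by
  simp [ite_and, Finset.sum_ite_irrel, Finset.sum_ite_eq']

lemma sum_ite_diag (u v : X) :
    ∑ a, (if a = u ∧ a = v then (1:ℝ) else 0) = if u = v then 1 else 0 := by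
  simp [ite_and, Finset.sum_ite_eq']

lemma exists_good_coupling (d : X → X → ℝ) (hd0 : ∀ x, d x x = 0)
    (htri : ∀ x y z, d x z ≤ d x y + d y z)
    (μ ν : X → ℝ) (hμ : IsProb μ) (hν : IsProb ν) :
    ∃ π : X → X → ℝ, IsCoupling μ ν π ∧ (∀ x, min (μ x) (ν x) ≤ π x x) ∧
      ∀ π' : X → X → ℝ, IsCoupling μ ν π' → cost d π ≤ cost d π' := by
  classical
  set S : Set (X → X → ℝ) := {π | IsCoupling μ ν π} with hS
  have hScpt : IsCompact S := coupling_set_compact μ ν hμ hν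
  have hSne : S.Nonempty := by
    refine ⟨fun x y => μ x * ν y,
      ⟨fun x y => mul_nonneg (hμ.1 x) (hν.1 y), fun x => ?_, fun y => ?_⟩⟩
    · rw [← Finset.mul_sum, hν.2, mul_one]
    · rw [← Finset.sum_mul, hμ.2, one_mul]
  obtain ⟨π₁, hπ₁S, hπ₁min⟩ := hScpt.exists_isMinOn hSne (cost_continuous d).continuousOn
  set S' : Set (X → X → ℝ) := S ∩ {π | cost d π = cost d π₁} with hS'
  have hS'cpt : IsCompact S' :=
    hScpt.inter_right (isClosed_eq (cost_continuous d) continuous_const)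
  have hS'ne : S'.Nonempty := ⟨π₁, hπ₁S, rfl⟩
  obtain ⟨π, hπS', hπmax⟩ := hS'cpt.exists_isMaxOn hS'ne diag_continuous.continuousOn
  obtain ⟨hπS, hπcost⟩ := hπS'
  have hπC : IsCoupling μ ν π := hπS
  obtain ⟨hpos, hrow, hcol⟩ := hπC
  refine ⟨π, hπS, ?_, ?_⟩
  swap
  · intro π' hπ'
    have h := hπ₁min (a := π') hπ'
    simp only [Set.mem_setOf_eq] at hπcost
    rw [hπcost]
    exact h
  intro x₀
  by_contra hcon
  push_neg at hcon
  have hμx : π x₀ x₀ < μ x₀ := lt_of_lt_of_le hcon (min_le_left _ _)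
  have hνx : π x₀ x₀ < ν x₀ := lt_of_lt_of_le hcon (min_le_right _ _)
  have hy : ∃ y₀, y₀ ≠ x₀ ∧ 0 < π x₀ y₀ := by
    by_contra h
    push_neg at h
    have hs : ∑ y, π x₀ y = π x₀ x₀ := by
      apply Finset.sum_eq_single
      · intro b _ hb
        exact le_antisymm (h b hb) (hpos x₀ b)
      · intro h'; exact absurd (mem_univ x₀) h'
    rw [hrow x₀] at hs
    linarith
  have hz : ∃ z₀, z₀ ≠ x₀ ∧ 0 < π z₀ x₀ := by
    by_contra h
    push_neg at h
    have hs : ∑ z, π z x₀ = π x₀ x₀ := by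
      apply Finset.sum_eq_single
      · intro b _ hb
        exact le_antisymm (h b hb) (hpos b x₀)
      · intro h'; exact absurd (mem_univ x₀) h'
    rw [hcol x₀] at hs
    linarith
  obtain ⟨y₀, hy₀ne, hy₀pos⟩ := hy
  obtain ⟨z₀, hz₀ne, hz₀pos⟩ := hz
  have hxy : x₀ ≠ y₀ := hy₀ne.symm
  have hxz : x₀ ≠ z₀ := hz₀ne.symm
  set ε : ℝ := min (π x₀ y₀) (π z₀ x₀) with hε
  have hεpos : 0 < ε := lt_min hy₀pos hz₀pos
  have he1 : ε ≤ π x₀ y₀ := min_le_left _ _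
  have he2 : ε ≤ π z₀ x₀ := min_le_right _ _
  set c : X → X → ℝ := fun a b =>
    (if a = x₀ ∧ b = x₀ then (1:ℝ) else 0) - (if a = x₀ ∧ b = y₀ then 1 else 0)
    + (if a = z₀ ∧ b = y₀ then 1 else 0) - (if a = z₀ ∧ b = x₀ then 1 else 0) with hc
  set π' : X → X → ℝ := fun a b => π a b + ε * c a b with hπ'def
  have hrowc : ∀ a, ∑ b, c a b = 0 := by
    intro a
    simp only [hc, Finset.sum_sub_distrib, Finset.sum_add_distrib, sum_ite_row]
    ring
  have hcolc : ∀ b, ∑ a, c a b = 0 := by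
    intro b
    simp only [hc, Finset.sum_sub_distrib, Finset.sum_add_distrib, sum_ite_col]
    ring
  have hπ'S : π' ∈ S := by
    refine ⟨?_, ?_, ?_⟩
    · intro a b
      simp only [hπ'def, hc]
      by_cases h1 : a = x₀ ∧ b = y₀
      · obtain ⟨rfl, rfl⟩ := h1
        simp [hxy, hxz, Ne.symm hxy]
        linarith
      · by_cases h2 : a = z₀ ∧ b = x₀
        · obtain ⟨rfl, rfl⟩ := h2
          simp [hz₀ne, hxy, Ne.symm hxz]
          linarith
        · rw [if_neg h1, if_neg h2]
          have h0 := hpos a b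
          split_ifs <;> nlinarith [hεpos.le]
    · intro a
      simp only [hπ'def]
      rw [Finset.sum_add_distrib, ← Finset.mul_sum, hrowc, mul_zero, add_zero, hrow]
    · intro b
      simp only [hπ'def]
      rw [Finset.sum_add_distrib, ← Finset.mul_sum, hcolc, mul_zero, add_zero, hcol]
  have hcostc : ∑ a, ∑ b, d a b * c a b = d x₀ x₀ - d x₀ y₀ + d z₀ y₀ - d z₀ x₀ := by
    have hexp : ∀ a b, d a b * c a b =
        (if a = x₀ ∧ b = x₀ then (1:ℝ) else 0) * d a b
        - (if a = x₀ ∧ b = y₀ then (1:ℝ) else 0) * d a b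
        + (if a = z₀ ∧ b = y₀ then (1:ℝ) else 0) * d a b
        - (if a = z₀ ∧ b = x₀ then (1:ℝ) else 0) * d a b := by
      intro a b; simp only [hc]; ring
    simp only [hexp, Finset.sum_sub_distrib, Finset.sum_add_distrib, sum_sum_ite_mul]
  have hcostπ' : cost d π' ≤ cost d π := by
    have : cost d π' = cost d π + ε * (d x₀ x₀ - d x₀ y₀ + d z₀ y₀ - d z₀ x₀) := by
      simp only [cost, hπ'def, mul_add, Finset.sum_add_distrib]
      congr 1
      rw [← hcostc, Finset.mul_sum]
      congr 1; ext a
      rw [Finset.mul_sum]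
      congr 1; ext b
      ring
    rw [this]
    have htr := htri z₀ x₀ y₀
    have hd00 := hd0 x₀
    nlinarith [hεpos.le]
  have hπ'S' : π' ∈ S' := by
    refine ⟨hπ'S, ?_⟩
    simp only [Set.mem_setOf_eq] at hπcost ⊢
    have h1 : cost d π₁ ≤ cost d π' := hπ₁min (a := π') hπ'S
    have h2 : cost d π' ≤ cost d π₁ := by rw [← hπcost]; exact hcostπ'
    exact le_antisymm h2 h1
  have hdiag : ∑ a, π' a a = ∑ a, π a a + ε * (1 + if z₀ = y₀ then 1 else 0) := by
    simp only [hπ'def, Finset.sum_add_distrib, ← Finset.mul_sum]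
    congr 2
    simp only [hc, Finset.sum_sub_distrib, Finset.sum_add_distrib, sum_ite_diag]
    simp [hxy, hxz, Ne.symm hxz]
  have hmax := hπmax hπ'S'
  simp only [Set.mem_setOf_eq] at hmax
  rw [hdiag] at hmax
  have : (0:ℝ) ≤ if z₀ = y₀ then (1:ℝ) else 0 := by positivity
  nlinarith [hεpos]

/-- The truncated Wasserstein distance is Lipschitz in the truncation level. -/
theorem truncated_wasserstein_lipschitz_in_level [MetricSpace X]
    (l₁ l₂ : ℝ) (h1 : 0 < l₁) (h12 : l₁ ≤ l₂)
    (μ ν : X → ℝ) (hμ : IsProb μ) (hν : IsProb ν) :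
    W (fun x y => min l₂ (dist x y)) μ ν - W (fun x y => min l₁ (dist x y)) μ ν ≤
      (l₂ - l₁) * TV μ ν := by
  have hl1 : (0:ℝ) ≤ l₁ := h1.le
  have hl2 : (0:ℝ) ≤ l₂ := le_trans hl1 h12
  set d₁ : X → X → ℝ := fun x y => min l₁ (dist x y) with hd₁def
  set d₂ : X → X → ℝ := fun x y => min l₂ (dist x y) with hd₂def
  have hd₁0 : ∀ x, d₁ x x = 0 := by
    intro x
    simp [hd₁def, dist_self, min_eq_right hl1]
  have htri : ∀ x y z, d₁ x z ≤ d₁ x y + d₁ y z := by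
    intro x y z
    simp only [hd₁def]
    rcases le_total l₁ (dist x y) with h | h
    · have ha : min l₁ (dist x z) ≤ l₁ := min_le_left _ _
      have h0 : (0:ℝ) ≤ min l₁ (dist y z) := le_min hl1 dist_nonneg
      rw [min_eq_left h]
      linarith
    · rcases le_total l₁ (dist y z) with h' | h'
      · have ha : min l₁ (dist x z) ≤ l₁ := min_le_left _ _
        have h0 : (0:ℝ) ≤ min l₁ (dist x y) := le_min hl1 dist_nonneg
        rw [min_eq_left h']
        linarith
      · have ha : min l₁ (dist x z) ≤ dist x z := min_le_right _ _
        rw [min_eq_right h, min_eq_right h']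
        linarith [dist_triangle x y z]
  obtain ⟨π, hπ, hdiag, hopt⟩ := exists_good_coupling d₁ hd₁0 htri μ ν hμ hν
  have hpos := hπ.1
  have hrow := hπ.2.1
  have hne : ({c | ∃ π' : X → X → ℝ, IsCoupling μ ν π' ∧
      c = ∑ x, ∑ y, d₁ x y * π' x y}).Nonempty := ⟨_, π, hπ, rfl⟩
  have hbdd : ∀ (d : X → X → ℝ), (∀ x y, 0 ≤ d x y) →
      BddBelow {c | ∃ π' : X → X → ℝ, IsCoupling μ ν π' ∧ c = ∑ x, ∑ y, d x y * π' x y} := by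
    intro d hd
    refine ⟨0, ?_⟩
    rintro c ⟨π', hπ', rfl⟩
    exact Finset.sum_nonneg fun x _ => Finset.sum_nonneg fun y _ =>
      mul_nonneg (hd x y) (hπ'.1 x y)
  have hd₁nn : ∀ x y, 0 ≤ d₁ x y := fun x y => le_min hl1 dist_nonneg
  have hd₂nn : ∀ x y, 0 ≤ d₂ x y := fun x y => le_min hl2 dist_nonneg
  have hW1 : W d₁ μ ν = ∑ x, ∑ y, d₁ x y * π x y := by
    unfold W
    apply le_antisymm
    · exact csInf_le (hbdd d₁ hd₁nn) ⟨π, hπ, rfl⟩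
    · apply le_csInf hne
      rintro c ⟨π', hπ', rfl⟩
      exact hopt π' hπ'
  have hW2 : W d₂ μ ν ≤ ∑ x, ∑ y, d₂ x y * π x y := by
    unfold W
    exact csInf_le (hbdd d₂ hd₂nn) ⟨π, hπ, rfl⟩
  have hpt : ∀ x y, d₂ x y * π x y ≤
      d₁ x y * π x y + (l₂ - l₁) * ((if x = y then (0:ℝ) else 1) * π x y) := by
    intro x y
    by_cases hxy : x = y
    · subst hxy
      have e2 : d₂ x x = 0 := by simp [hd₂def, dist_self, min_eq_right hl2]
      rw [hd₁0 x, e2, if_pos rfl]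
      simp
    · have hπnn := hpos x y
      have hmin : d₂ x y ≤ d₁ x y + (l₂ - l₁) := by
        simp only [hd₁def, hd₂def]
        rcases le_total l₁ (dist x y) with h | h
        · rw [min_eq_left h]; linarith [min_le_left l₂ (dist x y)]
        · rw [min_eq_right h]; linarith [min_le_right l₂ (dist x y)]
      rw [if_neg hxy]
      nlinarith
  have hsum : ∑ x, ∑ y, d₂ x y * π x y ≤
      ∑ x, ∑ y, d₁ x y * π x y + (l₂ - l₁) * (1 - ∑ x, π x x) := by
    have ha : ∑ x, ∑ y, d₂ x y * π x y ≤
        ∑ x, ∑ y, (d₁ x y * π x y + (l₂ - l₁) * ((if x = y then (0:ℝ) else 1) * π x y)) :=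
      Finset.sum_le_sum fun x _ => Finset.sum_le_sum fun y _ => hpt x y
    have h2 : ∑ x, ∑ y, (d₁ x y * π x y + (l₂ - l₁) * ((if x = y then (0:ℝ) else 1) * π x y))
        = ∑ x, ∑ y, d₁ x y * π x y
          + (l₂ - l₁) * ∑ x, ∑ y, ((if x = y then (0:ℝ) else 1) * π x y) := by
      simp only [Finset.sum_add_distrib, Finset.mul_sum]
    have h3 : ∑ x, ∑ y, ((if x = y then (0:ℝ) else 1) * π x y) = 1 - ∑ x, π x x := by
      have hx : ∀ x, ∑ y, ((if x = y then (0:ℝ) else 1) * π x y) = μ x - π x x := by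
        intro x
        have he : ∀ y, (if x = y then (0:ℝ) else 1) * π x y
            = π x y - (if x = y then π x y else 0) := by
          intro y; split_ifs <;> ring
        simp only [he, Finset.sum_sub_distrib, hrow x, Finset.sum_ite_eq,
          Finset.mem_univ, if_true]
      simp only [hx, Finset.sum_sub_distrib, hμ.2]
    rw [h2, h3] at ha
    exact ha
  have hTVsum : ∑ x, min (μ x) (ν x) = 1 - TV μ ν := by
    have hm : ∀ x, min (μ x) (ν x) = (μ x + ν x - |μ x - ν x|) / 2 := by
      intro x
      rcases le_total (μ x) (ν x) with h | h
      · rw [min_eq_left h, abs_of_nonpos (by linarith)]; ring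
      · rw [min_eq_right h, abs_of_nonneg (by linarith)]; ring
    simp only [hm]
    rw [← Finset.sum_div, Finset.sum_sub_distrib, Finset.sum_add_distrib, hμ.2, hν.2, TV]
    ring
  have hdiagsum : 1 - TV μ ν ≤ ∑ x, π x x := by
    rw [← hTVsum]
    exact Finset.sum_le_sum fun x _ => hdiag x
  have hl12 : (0:ℝ) ≤ l₂ - l₁ := by linarith
  calc W d₂ μ ν - W d₁ μ ν
      ≤ (∑ x, ∑ y, d₂ x y * π x y) - ∑ x, ∑ y, d₁ x y * π x y := by
        rw [hW1]; linarith
    _ ≤ (l₂ - l₁) * (1 - ∑ x, π x x) := by linarith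
    _ ≤ (l₂ - l₁) * TV μ ν := by nlinarith
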